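/- Let ℓ ∈ ℂ not be an odd integer, and let V(ℓ) be the representation with basis {eₖ}ₖ∈ℤ, A·eₖ = eₖ₊₁, B·eₖ = ((1-ℓ)/2 - ⌊k/2⌋)·eₖ₋₁. Then V(ℓ) is irreducible: any nonzero subspace of V(ℓ) invariant under both A and B equals V(ℓ). -/

import Mathlib

/-- The shift operator `A` on the space `V(ℓ) = ℤ →₀ K`, `A eₖ = eₖ₊₁`. -/
noncomputable def aslA (K : Type*) [Field K] : Module.End K (ℤ →₀ K) :=
  Finsupp.lsum K fun k => (LinearMap.id : K →ₗ[K] K).smulRight (Finsupp.single (k + 1) (1 : K))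

/-- The operator `B` on `V(ℓ)`, `B eₖ = ((1-ℓ)/2 - ⌊k/2⌋) eₖ₋₁`. -/
noncomputable def aslB (K : Type*) [Field K] (ℓ : K) : Module.End K (ℤ →₀ K) :=
  Finsupp.lsum K fun k => (LinearMap.id : K →ₗ[K] K).smulRight
    ((((1 : K) - ℓ) / 2 - ((Int.fdiv k 2 : ℤ) : K)) • Finsupp.single (k - 1) (1 : K))

noncomputable def cc (ℓ : ℂ) (k : ℤ) : ℂ := ((1:ℂ) - ℓ) / 2 - ((Int.fdiv k 2 : ℤ) : ℂ)

lemma aslA_apply (v : ℤ →₀ ℂ) (m : ℤ) : (aslA ℂ v) m = v (m - 1) := by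
  classical
  rw [aslA, Finsupp.lsum_apply, Finsupp.sum_apply]
  simp only [LinearMap.smulRight_apply, LinearMap.id_apply, Finsupp.smul_apply,
    Finsupp.single_apply, smul_eq_mul, mul_ite, mul_one, mul_zero]
  rw [Finsupp.sum]
  have h : ∀ a : ℤ, (a + 1 = m) = (a = m - 1) := fun a => propext (by omega)
  simp_rw [h]
  rw [Finset.sum_ite_eq' v.support (m-1)]
  split <;> simp_all [Finsupp.notMem_support_iff]

lemma aslB_apply (ℓ : ℂ) (v : ℤ →₀ ℂ) (m : ℤ) : (aslB ℂ ℓ v) m = cc ℓ (m+1) * v (m + 1) := by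
  classical
  rw [aslB, Finsupp.lsum_apply, Finsupp.sum_apply]
  simp only [LinearMap.smulRight_apply, LinearMap.id_apply, Finsupp.smul_apply,
    Finsupp.single_apply, smul_eq_mul, mul_ite, mul_one, mul_zero]
  rw [Finsupp.sum]
  have h : ∀ a : ℤ, (a - 1 = m) = (a = m + 1) := fun a => propext (by omega)
  simp_rw [h]
  rw [Finset.sum_ite_eq' v.support (m+1)]
  split
  · rw [cc]; ring
  · rw [Finsupp.notMem_support_iff.mp (by assumption)]; ring

noncomputable def Fop (ℓ : ℂ) : Module.End ℂ (ℤ →₀ ℂ) :=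
  aslA ℂ ∘ₗ aslB ℂ ℓ + aslB ℂ ℓ ∘ₗ aslA ℂ

noncomputable def dd (ℓ : ℂ) (m : ℤ) : ℂ := (1 - ℓ) - (m : ℂ)

lemma cc_add (ℓ : ℂ) (m : ℤ) : cc ℓ m + cc ℓ (m + 1) = dd ℓ m := by
  have h : Int.fdiv m 2 + Int.fdiv (m+1) 2 = m := by
    rw [Int.fdiv_eq_ediv_of_nonneg _ (by norm_num), Int.fdiv_eq_ediv_of_nonneg _ (by norm_num)]
    omega
  rw [cc, cc, dd]
  have : ((Int.fdiv m 2 : ℤ) : ℂ) + ((Int.fdiv (m+1) 2 : ℤ) : ℂ) = (m : ℂ) := by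
    rw [← Int.cast_add, h]
  rw [← this]; ring

lemma Fop_apply (ℓ : ℂ) (v : ℤ →₀ ℂ) (m : ℤ) : (Fop ℓ v) m = dd ℓ m * v m := by
  rw [Fop]
  simp only [LinearMap.add_apply, LinearMap.comp_apply, Finsupp.add_apply]
  rw [aslA_apply, aslB_apply, aslB_apply, aslA_apply]
  rw [show m - 1 + 1 = m from by ring, show m + 1 - 1 = m from by ring, ← cc_add]
  ring

lemma dd_inj (ℓ : ℂ) {m n : ℤ} (h : dd ℓ m = dd ℓ n) : m = n := by
  rw [dd, dd] at h
  have : (m : ℂ) = n := by linear_combination -h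
  exact_mod_cast this

lemma extract (ℓ : ℂ) (W : Submodule ℂ (ℤ →₀ ℂ)) (hF : ∀ v ∈ W, Fop ℓ v ∈ W) :
    ∀ n : ℕ, ∀ v ∈ W, v.support.card ≤ n → ∀ k, Finsupp.single k (v k) ∈ W := by
  intro n
  induction n with
  | zero =>
    intro v hv hc k
    have : v = 0 := by
      rwa [Nat.le_zero, Finset.card_eq_zero, Finsupp.support_eq_empty] at hc
    simp [this]
  | succ n ih =>
    intro v hv hc k
    by_cases hk : v k = 0
    · simp [hk]
    by_cases hs : ∀ j ∈ v.support, j = k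
    · have hvk : v = Finsupp.single k (v k) := by
        ext m
        by_cases hm : m = k
        · subst hm; rw [Finsupp.single_eq_same]
        · have hvm : v m = 0 := by
            by_contra h; exact hm (hs m (Finsupp.mem_support_iff.mpr h))
          rw [hvm, Finsupp.single_apply, if_neg (fun h => hm h.symm)]
      rw [← hvk]; exact hv
    · push_neg at hs
      obtain ⟨j, hj, hjk⟩ := hs
      set w := Fop ℓ v - dd ℓ j • v with hw
      have hwW : w ∈ W := W.sub_mem (hF v hv) (W.smul_mem _ hv)
      have hwc : ∀ m, w m = (dd ℓ m - dd ℓ j) * v m := by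
        intro m
        rw [hw, Finsupp.sub_apply, Finsupp.smul_apply, Fop_apply, smul_eq_mul]
        ring
      have hsub : w.support ⊆ v.support.erase j := by
        intro m hm
        have hm' := Finsupp.mem_support_iff.mp hm
        rw [hwc m] at hm'
        rw [Finset.mem_erase]
        constructor
        · rintro rfl; exact hm' (by rw [sub_self, zero_mul])
        · exact Finsupp.mem_support_iff.mpr (fun h => hm' (by rw [h, mul_zero]))
      have hcard : w.support.card ≤ n := by
        have := Finset.card_le_card hsub
        rw [Finset.card_erase_of_mem hj] at this
        omega
      have h1 := ih w hwW hcard k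
      rw [hwc k] at h1
      have hne : dd ℓ k - dd ℓ j ≠ 0 :=
        sub_ne_zero.mpr (fun h => hjk (dd_inj ℓ h.symm))
      have h2 := W.smul_mem (dd ℓ k - dd ℓ j)⁻¹ h1
      rwa [Finsupp.smul_single, smul_eq_mul, ← mul_assoc, inv_mul_cancel₀ hne, one_mul] at h2

lemma aslA_single (k : ℤ) (x : ℂ) : aslA ℂ (Finsupp.single k x) = Finsupp.single (k+1) x := by
  rw [aslA, Finsupp.lsum_single, LinearMap.smulRight_apply, LinearMap.id_apply,
    Finsupp.smul_single, smul_eq_mul, mul_one]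

lemma aslB_single (ℓ : ℂ) (k : ℤ) (x : ℂ) :
    aslB ℂ ℓ (Finsupp.single k x) = Finsupp.single (k-1) (cc ℓ k * x) := by
  rw [aslB, Finsupp.lsum_single]
  simp only [LinearMap.smulRight_apply, LinearMap.id_apply, smul_smul, cc]
  rw [Finsupp.smul_single, smul_eq_mul, mul_one, mul_comm]

lemma cc_ne (ℓ : ℂ) (hℓ : ¬ ∃ n : ℤ, ℓ = 2 * (n : ℂ) + 1) (k : ℤ) : cc ℓ k ≠ 0 := by
  intro h
  apply hℓ
  refine ⟨-(Int.fdiv k 2), ?_⟩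
  rw [cc] at h
  push_cast
  linear_combination -2 * h

theorem stmt_13 (ℓ : ℂ) (hℓ : ¬ ∃ n : ℤ, ℓ = 2 * (n : ℂ) + 1)
    (W : Submodule ℂ (ℤ →₀ ℂ)) (hW : W ≠ ⊥)
    (hA : ∀ v ∈ W, aslA ℂ v ∈ W) (hB : ∀ v ∈ W, aslB ℂ ℓ v ∈ W) :
    W = ⊤ := by
  have hF : ∀ v ∈ W, Fop ℓ v ∈ W := by
    intro v hv
    rw [Fop]
    exact W.add_mem (hA _ (hB v hv)) (hB _ (hA v hv))
  -- find a nonzero vector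
  obtain ⟨v, hvW, hv0⟩ := Submodule.exists_mem_ne_zero_of_ne_bot hW
  obtain ⟨k0, hk0⟩ : ∃ k0, v k0 ≠ 0 := by
    by_contra h
    push_neg at h
    exact hv0 (Finsupp.ext h)
  have h1 : Finsupp.single k0 (v k0) ∈ W :=
    extract ℓ W hF v.support.card v hvW le_rfl k0
  have he : Finsupp.single k0 (1:ℂ) ∈ W := by
    have := W.smul_mem (v k0)⁻¹ h1
    rwa [Finsupp.smul_single, smul_eq_mul, inv_mul_cancel₀ hk0] at this
  have key : ∀ n : ℤ, Finsupp.single (k0 + n) (1:ℂ) ∈ W := by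
    intro n
    induction n using Int.induction_on with
    | zero => simpa using he
    | succ i ih =>
      have := hA _ ih
      rw [aslA_single] at this
      rwa [show k0 + ((i:ℤ) + 1) = k0 + i + 1 from by ring]
    | pred i ih =>
      have := hB _ ih
      rw [aslB_single] at this
      have h2 := W.smul_mem (cc ℓ (k0 + -(i:ℤ)))⁻¹ this
      rw [Finsupp.smul_single, smul_eq_mul, mul_one,
        inv_mul_cancel₀ (cc_ne ℓ hℓ _)] at h2
      rwa [show k0 + (-(i:ℤ) - 1) = k0 + -(i:ℤ) - 1 from by ring]
  have hall : ∀ m : ℤ, Finsupp.single m (1:ℂ) ∈ W := by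
    intro m
    have := key (m - k0)
    rwa [show k0 + (m - k0) = m from by ring] at this
  rw [Submodule.eq_top_iff']
  intro u
  rw [← Finsupp.sum_single u, Finsupp.sum]
  apply Submodule.sum_mem
  intro k _
  have := W.smul_mem (u k) (hall k)
  rwa [Finsupp.smul_single, smul_eq_mul, mul_one] at this
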